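/- Let ε ∈ (0,2), g : ℕ → ℕ, M a positive integer, θ : ℤ₊ → ℤ₊ a rate of divergence of ∑ α_n (i.e. ∑_{k=1}^{θ(n)} α_k ≥ n for all n ≥ 1) where (α_n) is a sequence in [0,1], and ψ : (0,∞) → ℤ₊. Define Θ = θ(ψ(ε/3) − 1 + ⌈ln(3M/ε)⌉) + 1 and Δ = ε / (3·g_ε(Θ − ψ(ε/3))) where g_ε(n) = n + g(n + ψ(ε/3)). Suppose (t_n) satisfies t_n ≤ ε/3 for all n ≥ ψ(ε/3), and (s_n) is a sequence with 0 ≤ s_n ≤ M satisfying s_{n+1} ≤ (1 − α_n)·s_n + α_n·t_n + Δ for all n ≥ 1. Then s_n ≤ ε for all n ∈ [Θ, Θ + g(Θ)]. -/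

import Mathlib

theorem stmt2 (ε : ℝ) (hε : ε ∈ Set.Ioo (0:ℝ) 2) (g : ℕ → ℕ) (M : ℕ) (hM : 0 < M)
    (α t s : ℕ → ℝ) (θ : ℕ → ℕ) (ψ : ℝ → ℕ)
    (hθpos : ∀ n, 0 < θ n) (hψpos : ∀ e, 0 < ψ e)
    (hα : ∀ n, 1 ≤ n → α n ∈ Set.Icc (0:ℝ) 1)
    (hθ : ∀ n : ℕ, 1 ≤ n → (n : ℝ) ≤ ∑ k ∈ Finset.Icc 1 (θ n), α k)
    (ht : ∀ n, ψ (ε/3) ≤ n → t n ≤ ε/3)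
    (hs : ∀ n, 1 ≤ n → 0 ≤ s n ∧ s n ≤ M)
    (Θ : ℕ) (hΘ : Θ = θ (ψ (ε/3) - 1 + ⌈Real.log (3 * M / ε)⌉₊) + 1)
    (Δ : ℝ) (hΔ : Δ = ε / (3 * ((Θ - ψ (ε/3) : ℕ) + g ((Θ - ψ (ε/3)) + ψ (ε/3)) : ℕ)))
    (hrec : ∀ n, 1 ≤ n → s (n+1) ≤ (1 - α n) * s n + α n * t n + Δ) :
    ∀ n, Θ ≤ n → n ≤ Θ + g Θ → s n ≤ ε := by
  intro n hn1 hn2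
  have hε0 : 0 < ε := hε.1
  have hε2 : ε < 2 := hε.2
  set p := ψ (ε/3) with hp
  have hp1 : 1 ≤ p := hψpos _
  have hM1 : (1:ℝ) ≤ M := by exact_mod_cast hM
  -- 3M/ε > 1 so log positive and ceil ≥ 1
  have hx1 : (1:ℝ) < 3 * M / ε := by
    rw [lt_div_iff₀ hε0]; nlinarith
  have hlogpos : 0 < Real.log (3 * M / ε) := Real.log_pos hx1
  have hceil1 : 1 ≤ ⌈Real.log (3 * M / ε)⌉₊ := Nat.ceil_pos.mpr hlogpos
  set a := p - 1 + ⌈Real.log (3 * M / ε)⌉₊ with ha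
  have ha1 : 1 ≤ a := le_trans hceil1 (Nat.le_add_left _ _)
  -- θ a ≥ a
  have hθa : a ≤ θ a := by
    by_contra h
    push_neg at h
    have h1 : (a:ℝ) ≤ ∑ k ∈ Finset.Icc 1 (θ a), α k := hθ a ha1
    have h2 : ∑ k ∈ Finset.Icc 1 (θ a), α k ≤ (θ a : ℝ) := by
      calc ∑ k ∈ Finset.Icc 1 (θ a), α k ≤ ∑ k ∈ Finset.Icc 1 (θ a), 1 := by
            apply Finset.sum_le_sum
            intro k hk
            exact (hα k (Finset.mem_Icc.mp hk).1).2
        _ = (θ a : ℝ) := by simp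
    have : (a:ℝ) ≤ (θ a : ℝ) := le_trans h1 h2
    exact absurd (by exact_mod_cast this) (not_le.mpr h)
  have hpΘ : p < Θ := by
    rw [hΘ]; omega
  have hpn : p ≤ n := le_trans (le_of_lt hpΘ) hn1
  -- Δ ≥ 0
  set D : ℕ := (Θ - p) + g ((Θ - p) + p) with hD
  have hDΘ : (Θ - p) + p = Θ := Nat.sub_add_cancel (le_of_lt hpΘ)
  have hDpos : 0 < D := by
    have : 1 ≤ Θ - p := by omega
    omega
  have hDR : (0:ℝ) < (D:ℝ) := by exact_mod_cast hDpos
  have hΔ' : Δ = ε / (3 * (D:ℝ)) := hΔ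
  have hΔ0 : 0 ≤ Δ := by
    rw [hΔ']; positivity
  -- key induction
  have key : ∀ m : ℕ, s (p + m) ≤ M * ∏ k ∈ Finset.Ico p (p + m), (1 - α k) + ε/3 + m * Δ := by
    intro m
    induction m with
    | zero =>
      simp only [Nat.add_zero, Finset.Ico_self, Finset.prod_empty, Nat.cast_zero]
      have := (hs p hp1).2
      linarith
    | succ m ih =>
      have hpm1 : 1 ≤ p + m := by omega
      have hA := hα (p + m) hpm1
      have hA0 : 0 ≤ α (p + m) := hA.1
      have hA1 : α (p + m) ≤ 1 := hA.2
      have hT : t (p + m) ≤ ε/3 := ht (p + m) (by omega)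
      have h1 : s (p + m + 1) ≤ (1 - α (p+m)) * s (p+m) + α (p+m) * t (p+m) + Δ :=
        hrec (p + m) hpm1
      have h2 : (1 - α (p+m)) * s (p+m) ≤
          (1 - α (p+m)) * (M * ∏ k ∈ Finset.Ico p (p + m), (1 - α k) + ε/3 + m * Δ) := by
        apply mul_le_mul_of_nonneg_left ih (by linarith)
      have h3 : α (p+m) * t (p+m) ≤ α (p+m) * (ε/3) :=
        mul_le_mul_of_nonneg_left hT hA0
      have hprod : ∏ k ∈ Finset.Ico p (p + m + 1), (1 - α k)
          = (∏ k ∈ Finset.Ico p (p + m), (1 - α k)) * (1 - α (p + m)) := by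
        rw [Finset.prod_Ico_succ_top (by omega)]
      rw [show p + (m + 1) = p + m + 1 from rfl, hprod]
      push_cast
      have hmΔ : 0 ≤ α (p+m) * (m * Δ) := by positivity
      nlinarith [h1, h2, h3]
  -- product bound up to Θ
  have hprodΘ : (M:ℝ) * ∏ k ∈ Finset.Ico p Θ, (1 - α k) ≤ ε/3 := by
    have hS : Real.log (3 * M / ε) ≤ ∑ k ∈ Finset.Ico p Θ, α k := by
      have hsplit : ∑ k ∈ Finset.Icc 1 (θ a), α k
          = (∑ k ∈ Finset.Ioc 0 (p-1), α k) + ∑ k ∈ Finset.Ioc (p-1) (θ a), α k := by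
        rw [show Finset.Icc 1 (θ a) = Finset.Ioc 0 (θ a) from by rw [← Finset.Icc_add_one_left_eq_Ioc]; rfl]
        exact (Finset.sum_Ioc_consecutive α (Nat.zero_le _) (by omega)).symm
      have hS1 : ∑ k ∈ Finset.Ioc 0 (p-1), α k ≤ ((p:ℝ) - 1) := by
        calc ∑ k ∈ Finset.Ioc 0 (p-1), α k ≤ ∑ k ∈ Finset.Ioc 0 (p-1), 1 := by
              apply Finset.sum_le_sum
              intro k hk
              exact (hα k (Finset.mem_Ioc.mp hk).1).2
          _ = ((p-1 : ℕ) : ℝ) := by simp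
          _ = (p:ℝ) - 1 := by
              have : ((p-1:ℕ):ℝ) = (p:ℝ) - 1 := by
                push_cast [Nat.cast_sub hp1]; ring
              rw [this]
      have htot : (a:ℝ) ≤ ∑ k ∈ Finset.Icc 1 (θ a), α k := hθ a ha1
      have haR : (a:ℝ) = ((p:ℝ) - 1) + (⌈Real.log (3 * M / ε)⌉₊ : ℝ) := by
        rw [ha]; push_cast [Nat.cast_sub hp1]; ring
      have hIoc : Finset.Ioc (p-1) (θ a) = Finset.Ico p Θ := by
        rw [hΘ]
        ext k
        simp [Finset.mem_Ioc, Finset.mem_Ico]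
        omega
      have h2 : (⌈Real.log (3 * M / ε)⌉₊ : ℝ) ≤ ∑ k ∈ Finset.Ico p Θ, α k := by
        rw [← hIoc]
        rw [hsplit, haR] at htot
        linarith
      exact le_trans (Nat.le_ceil _) h2
    have hprodexp : ∏ k ∈ Finset.Ico p Θ, (1 - α k)
        ≤ Real.exp (-(∑ k ∈ Finset.Ico p Θ, α k)) := by
      calc ∏ k ∈ Finset.Ico p Θ, (1 - α k)
            ≤ ∏ k ∈ Finset.Ico p Θ, Real.exp (-(α k)) := by
              apply Finset.prod_le_prod
              · intro k hk
                have := (hα k (by have := (Finset.mem_Ico.mp hk).1; omega)).2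
                linarith
              · intro k hk
                have := Real.add_one_le_exp (-(α k))
                linarith
          _ = Real.exp (∑ k ∈ Finset.Ico p Θ, -(α k)) := (Real.exp_sum _ _).symm
          _ = Real.exp (-(∑ k ∈ Finset.Ico p Θ, α k)) := by rw [Finset.sum_neg_distrib]
    have hmono : Real.exp (-(∑ k ∈ Finset.Ico p Θ, α k))
        ≤ Real.exp (-(Real.log (3 * M / ε))) := by
      apply Real.exp_le_exp.mpr
      linarith
    have hexplog : Real.exp (-(Real.log (3 * M / ε))) = ε / (3 * M) := by
      rw [Real.exp_neg, Real.exp_log (by linarith : (0:ℝ) < 3 * M / ε)]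
      field_simp
    have hMpos : (0:ℝ) < M := by linarith
    calc (M:ℝ) * ∏ k ∈ Finset.Ico p Θ, (1 - α k)
        ≤ (M:ℝ) * (ε / (3 * M)) := by
          apply mul_le_mul_of_nonneg_left _ (le_of_lt hMpos)
          rw [← hexplog]
          exact le_trans hprodexp hmono
      _ = ε/3 := by field_simp
  -- final assembly
  have hnp : n = p + (n - p) := by omega
  have hkey := key (n - p)
  rw [← hnp] at hkey
  -- product over Ico p n ≤ product over Ico p Θ times something ≤ that
  have hprodsplit : ∏ k ∈ Finset.Ico p n, (1 - α k)
      = (∏ k ∈ Finset.Ico p Θ, (1 - α k)) * ∏ k ∈ Finset.Ico Θ n, (1 - α k) := by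
    rw [Finset.prod_Ico_consecutive _ (le_of_lt hpΘ) hn1]
  have hnonneg : ∀ k ∈ Finset.Ico p Θ, 0 ≤ 1 - α k := by
    intro k hk
    have := (hα k (by have := (Finset.mem_Ico.mp hk).1; omega)).2
    linarith
  have hprodΘnn : 0 ≤ ∏ k ∈ Finset.Ico p Θ, (1 - α k) := Finset.prod_nonneg hnonneg
  have htail : ∏ k ∈ Finset.Ico Θ n, (1 - α k) ≤ 1 := by
    apply Finset.prod_le_one
    · intro k hk
      have := (hα k (by have := (Finset.mem_Ico.mp hk).1; omega)).2
      linarith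
    · intro k hk
      have := (hα k (by have := (Finset.mem_Ico.mp hk).1; omega)).1
      linarith
  have hMnn : (0:ℝ) ≤ M := by linarith
  have hprodn : (M:ℝ) * ∏ k ∈ Finset.Ico p n, (1 - α k) ≤ ε/3 := by
    rw [hprodsplit]
    calc (M:ℝ) * ((∏ k ∈ Finset.Ico p Θ, (1 - α k)) * ∏ k ∈ Finset.Ico Θ n, (1 - α k))
        ≤ (M:ℝ) * ((∏ k ∈ Finset.Ico p Θ, (1 - α k)) * 1) := by
          apply mul_le_mul_of_nonneg_left _ hMnn
          exact mul_le_mul_of_nonneg_left htail hprodΘnn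
      _ = (M:ℝ) * ∏ k ∈ Finset.Ico p Θ, (1 - α k) := by ring
      _ ≤ ε/3 := hprodΘ
  -- (n-p) Δ ≤ ε/3
  have hnpD : n - p ≤ D := by rw [hD, hDΘ]; omega
  have hΔbound : ((n - p : ℕ) : ℝ) * Δ ≤ ε/3 := by
    have h1 : ((n - p : ℕ) : ℝ) ≤ (D:ℝ) := by exact_mod_cast hnpD
    have h2 : ((n - p : ℕ) : ℝ) * Δ ≤ (D:ℝ) * Δ := mul_le_mul_of_nonneg_right h1 hΔ0
    have h3 : (D:ℝ) * Δ = ε/3 := by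
      rw [hΔ']
      field_simp
    linarith
  linarith [hkey, hprodn, hΔbound]
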